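/- arXiv:2001.03089 — 5 statements merged into one kernel-verified Lean document; each statement's English description precedes it below -/
import Mathlib

section
/- Let e be a nonzero error vector in (Fin n → ZMod 2). Under hypotheses (H1) and (H2), the likelihood of e is at most the likelihood of its parent: Q(e) ≤ Q(π(e)). -/
/-- The index of the least reliable flipped bit: the largest coordinate `j`
with `e j ≠ 0` (as a natural number; `0` if `e = 0`). -/
def jstar {n : ℕ} (e : Fin n → ZMod 2) : ℕ :=
  (Finset.univ.filter fun j => e j ≠ 0).sup fun j => (j : ℕ)

/-- The parent `π(e)` of an error vector: zero out coordinate `j*(e)` and,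
if `j*(e) > 0`, set coordinate `j*(e) - 1` to `1`; `π(0) = 0`. -/
def parent {n : ℕ} (e : Fin n → ZMod 2) : Fin n → ZMod 2 :=
  if e = 0 then 0
  else fun j =>
    if (j : ℕ) = jstar e then 0
    else if 0 < jstar e ∧ (j : ℕ) = jstar e - 1 then 1
    else e j
/-- Likelihood of an error vector given per-bit likelihoods `q`. -/
noncomputable def Q {n : ℕ} (q : Fin n → ZMod 2 → NNReal) (e : Fin n → ZMod 2) : NNReal :=
  ∏ j, q j (e j)

theorem likelihood_le_parent {n : ℕ} (q : Fin n → ZMod 2 → NNReal)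
    (H1 : ∀ j, q j 1 ≤ q j 0)
    (H2 : ∀ j l : Fin n, j < l → q j 0 * q l 1 ≤ q j 1 * q l 0)
    (e : Fin n → ZMod 2) (he : e ≠ 0) :
    Q q e ≤ Q q (parent e) := by
  classical
  have h01 : ∀ x : ZMod 2, x ≠ 0 → x = 1 := by decide
  obtain ⟨j0, hj0⟩ : ∃ j, e j ≠ 0 := by
    by_contra h; push_neg at h; exact he (funext h)
  set s := Finset.univ.filter (fun j => e j ≠ 0) with hs
  have hsne : s.Nonempty := ⟨j0, by simp [hs, hj0]⟩
  obtain ⟨J, hJs, hJ⟩ := Finset.exists_mem_eq_sup s hsne (fun j => (j : ℕ))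
  have hJn : (J : ℕ) = jstar e := by rw [jstar, ← hs, hJ]
  have heJ : e J = 1 := h01 _ (by simpa [hs] using hJs)
  have hpar : parent e = fun j : Fin n =>
      if (j : ℕ) = jstar e then 0
      else if 0 < jstar e ∧ (j : ℕ) = jstar e - 1 then 1
      else e j := by
    simp [parent, he]
  rcases Nat.eq_zero_or_pos (jstar e) with h0 | hpos
  · unfold Q
    apply Finset.prod_le_prod'
    intro j _
    rw [hpar]
    by_cases hj : (j : ℕ) = jstar e
    · have hje : j = J := Fin.ext (by omega)
      simp only [hj, if_pos rfl]
      rw [hje, heJ]; exact H1 J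
    · rw [h0] at hj; simp [hj, h0]
  · have hKlt : jstar e - 1 < n := lt_of_le_of_lt (Nat.sub_le _ _) (hJn ▸ J.isLt)
    set K : Fin n := ⟨jstar e - 1, hKlt⟩ with hK
    have hKJ : K ≠ J := by
      intro h
      have := congrArg Fin.val h
      simp only [hK] at this
      omega
    have hparJ : parent e J = 0 := by rw [hpar]; simp [hJn]
    have hparK : parent e K = 1 := by
      rw [hpar]
      have h1 : (K : ℕ) ≠ jstar e := by simp [hK]; omega
      have h2 : (K : ℕ) = jstar e - 1 := rfl
      simp [h1, h2, hpos]
      omega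
    have hoff : ∀ j, j ≠ K → j ≠ J → parent e j = e j := by
      intro j hK' hJ'
      rw [hpar]
      have h1 : (j : ℕ) ≠ jstar e := fun h => hJ' (Fin.ext (by omega))
      have h2 : (j : ℕ) ≠ jstar e - 1 := fun h => hK' (Fin.ext h)
      simp [h1, h2]
    have hsplit : ∀ f : Fin n → NNReal,
        ∏ j, f j = f K * (f J * ∏ j ∈ (Finset.univ.erase K).erase J, f j) := by
      intro f
      rw [Finset.mul_prod_erase _ f (Finset.mem_erase.mpr ⟨Ne.symm hKJ, Finset.mem_univ J⟩),
        Finset.mul_prod_erase _ f (Finset.mem_univ K)]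
    have hP : ∏ j ∈ (Finset.univ.erase K).erase J, q j (parent e j)
        = ∏ j ∈ (Finset.univ.erase K).erase J, q j (e j) := by
      apply Finset.prod_congr rfl
      intro j hj
      simp only [Finset.mem_erase] at hj
      rw [hoff j hj.2.1 hj.1]
    have hKltJ : K < J := by
      rw [Fin.lt_def]
      simp only [hK]
      omega
    unfold Q
    rw [hsplit (fun j => q j (e j)), hsplit (fun j => q j (parent e j))]
    simp only [hparJ, hparK, heJ, hP]
    rcases eq_or_ne (e K) 0 with hk0 | hk1
    · rw [hk0, ← mul_assoc, ← mul_assoc]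
      exact mul_le_mul_left (H2 K J hKltJ) _
    · rw [h01 _ hk1]
      exact mul_le_mul_right (mul_le_mul_left (H1 J) _) _
end

section
/- Let e be a nonzero error vector in (Fin n → ZMod 2). Then iterating the parent map (j*(e) : ℕ) + 1 times starting from e yields the zero vector: π^[(j*(e) : ℕ) + 1](e) = 0. In particular every error vector reaches 0 under iteration of π. -/
lemma parent_zero {n : ℕ} : parent (0 : Fin n → ZMod 2) = 0 := by
  simp [parent]

lemma le_jstar {n : ℕ} {e : Fin n → ZMod 2} {j : Fin n} (h : e j ≠ 0) :
    (j : ℕ) ≤ jstar e :=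
  Finset.le_sup (f := fun j : Fin n => (j : ℕ))
    (Finset.mem_filter.2 ⟨Finset.mem_univ _, h⟩)

lemma parent_eq_zero_of_jstar_eq_zero {n : ℕ} {e : Fin n → ZMod 2}
    (he : e ≠ 0) (h0 : jstar e = 0) : parent e = 0 := by
  funext j
  simp only [parent, if_neg he]
  by_cases hj : (j : ℕ) = jstar e
  · simp [hj]
  · have hcond : ¬ (0 < jstar e ∧ (j : ℕ) = jstar e - 1) := by omega
    simp only [if_neg hj, if_neg hcond]
    by_contra hne
    have := le_jstar hne
    omega

lemma parent_jstar_lt {n : ℕ} {e : Fin n → ZMod 2} (he : e ≠ 0)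
    (hp : parent e ≠ 0) : jstar (parent e) < jstar e := by
  have hpos : 0 < jstar e := by
    rcases Nat.eq_zero_or_pos (jstar e) with h | h
    · exact absurd (parent_eq_zero_of_jstar_eq_zero he h) hp
    · exact h
  have hbot : (⊥ : ℕ) < jstar e := hpos
  rw [jstar, Finset.sup_lt_iff hbot]
  intro j hj
  rw [Finset.mem_filter] at hj
  have hne : parent e j ≠ 0 := hj.2
  simp only [parent, if_neg he] at hne
  by_cases h1 : (j : ℕ) = jstar e
  · simp [h1] at hne
  · by_cases h2 : 0 < jstar e ∧ (j : ℕ) = jstar e - 1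
    · omega
    · simp only [if_neg h1, if_neg h2] at hne
      have := le_jstar hne
      omega

lemma iterate_zero_of_lt {n : ℕ} : ∀ m : ℕ, ∀ e : Fin n → ZMod 2,
    jstar e < m → parent^[m] e = 0 := by
  intro m
  induction m with
  | zero => intro e h; omega
  | succ m ih =>
    intro e h
    rw [Function.iterate_succ_apply]
    by_cases hp : parent e = 0
    · rw [hp]; exact Function.iterate_fixed parent_zero m
    · have he : e ≠ 0 := fun h0 => hp (by rw [h0]; exact parent_zero)
      exact ih _ (by have := parent_jstar_lt he hp; omega)

theorem parent_iterate_eq_zero {n : ℕ} (e : Fin n → ZMod 2) (he : e ≠ 0) :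
    parent^[jstar e + 1] e = 0 ∧ ∀ v : Fin n → ZMod 2, ∃ k : ℕ, parent^[k] v = 0 := by
  exact ⟨iterate_zero_of_lt _ e (Nat.lt_succ_self _),
    fun v => ⟨jstar v + 1, iterate_zero_of_lt _ v (Nat.lt_succ_self _)⟩⟩
end

section
/- Suppose n ≥ 1. Every error vector e in (Fin n → ZMod 2) has at most two children, i.e. the set {v : v ≠ 0 ∧ π(v) = e} has cardinality at most 2. Moreover, the zero vector has exactly one child, namely δ_0 (so {v : v ≠ 0 ∧ π(v) = 0} = {δ_0}), and if e ≠ 0 and j*(e) = n − 1 then e has no children. -/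
/-- `deltaN k` is the vector with a `1` at the coordinate of index `k` and `0` elsewhere. -/
def deltaN {n : ℕ} (k : ℕ) : Fin n → ZMod 2 := fun i => if (i : ℕ) = k then 1 else 0

/-- The children set `C(e)`. -/
def children {n : ℕ} (e : Fin n → ZMod 2) : Finset (Fin n → ZMod 2) :=
  if e = 0 then {deltaN 0}
  else if jstar e = n - 1 then ∅
  else {e + deltaN (jstar e + 1), e + deltaN (jstar e) + deltaN (jstar e + 1)}

lemma zmod2_eq_one {x : ZMod 2} (h : x ≠ 0) : x = 1 := by revert h; revert x; decide

lemma jstar_spec {n : ℕ} {e : Fin n → ZMod 2} (he : e ≠ 0) :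
    ∃ j : Fin n, (j : ℕ) = jstar e ∧ e j = 1 := by
  have hne : (Finset.univ.filter fun j => e j ≠ 0).Nonempty := by
    rcases Function.ne_iff.mp he with ⟨j, hj⟩
    exact ⟨j, by simpa using hj⟩
  obtain ⟨b, hb, hsup⟩ := Finset.exists_mem_eq_sup _ hne (fun j : Fin n => (j : ℕ))
  exact ⟨b, hsup.symm, zmod2_eq_one (Finset.mem_filter.mp hb).2⟩

lemma eq_zero_of_jstar_lt {n : ℕ} {e : Fin n → ZMod 2} {j : Fin n} (h : jstar e < j) :
    e j = 0 := by
  by_contra hj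
  exact absurd (le_jstar hj) (not_le.mpr h)

lemma mem_children {n : ℕ} {v e : Fin n → ZMod 2} (hv : v ≠ 0) (hp : parent v = e) :
    v ∈ children e := by
  obtain ⟨j0, hj0, hvj0⟩ := jstar_spec hv
  have hpk : ∀ k : Fin n, e k = if (k : ℕ) = jstar v then 0
      else if 0 < jstar v ∧ (k : ℕ) = jstar v - 1 then 1 else v k := by
    intro k
    rw [← hp]
    simp [parent, hv]
  rcases Nat.eq_zero_or_pos (jstar v) with h0 | hpos
  · -- jstar v = 0 : e = 0 and v = deltaN 0
    have he : e = 0 := by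
      funext k
      rw [hpk k]
      by_cases hk : (k : ℕ) = jstar v
      · simp [hk]
      · rw [if_neg hk, if_neg (by omega)]
        simpa using eq_zero_of_jstar_lt (show jstar v < (k : ℕ) by omega)
    have hvδ : v = deltaN 0 := by
      funext k
      by_cases hk : (k : ℕ) = 0
      · have hkj : k = j0 := Fin.ext (by omega)
        rw [hkj]
        simp [deltaN, hvj0, show (j0 : ℕ) = 0 by omega]
      · simp only [deltaN, if_neg hk]
        exact eq_zero_of_jstar_lt (show jstar v < (k : ℕ) by omega)
    rw [he, hvδ, children]
    simp
  · set J := jstar v with hJ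
    have hJn : J < n := hj0 ▸ j0.isLt
    set jm : Fin n := ⟨J - 1, by omega⟩ with hjm
    have hjmv : (jm : ℕ) = J - 1 := rfl
    have hejm : e jm = 1 := by
      rw [hpk jm, if_neg (by omega), if_pos ⟨hpos, hjmv⟩]
    have hej0 : e j0 = 0 := by rw [hpk j0, if_pos hj0]
    have hothers : ∀ k : Fin n, (k : ℕ) ≠ J → (k : ℕ) ≠ J - 1 → e k = v k := by
      intro k h1 h2
      rw [hpk k, if_neg h1, if_neg (by tauto)]
    have hetail : ∀ k : Fin n, J < (k : ℕ) → e k = 0 := by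
      intro k hk
      rw [hothers k (by omega) (by omega)]
      exact eq_zero_of_jstar_lt hk
    have hene : e ≠ 0 := by
      intro h
      rw [h] at hejm
      simp at hejm
    have hje : jstar e = J - 1 := by
      apply le_antisymm
      · apply Finset.sup_le
        intro k hk
        simp only [Finset.mem_filter, Finset.mem_univ, true_and] at hk
        by_contra hlt
        push_neg at hlt
        have hk0 : e k = 0 := by
          by_cases hkJ : (k : ℕ) = J
          · have hkj : k = j0 := Fin.ext (by omega)
            rw [hkj]; exact hej0
          · exact hetail k (by omega)
        exact hk hk0
      · have h1 := le_jstar (show e jm ≠ 0 by rw [hejm]; exact one_ne_zero)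
        omega
    have hne' : jstar e ≠ n - 1 := by omega
    have key : v = e + deltaN (jstar e + 1) ∨
        v = e + deltaN (jstar e) + deltaN (jstar e + 1) := by
      rcases eq_or_ne (v jm) 0 with hv0 | hv1
      · right
        funext k
        simp only [Pi.add_apply, deltaN, hje]
        by_cases hkJ : (k : ℕ) = J
        · have hkj : k = j0 := Fin.ext (by omega)
          rw [if_neg (by omega), if_pos (by omega), hkj, hej0, hvj0]
          decide
        · by_cases hkm : (k : ℕ) = J - 1
          · have hkj : k = jm := Fin.ext (by omega)
            rw [if_pos hkm, if_neg (by omega), hkj, hejm, hv0]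
            decide
          · rw [if_neg hkm, if_neg (by omega), hothers k hkJ hkm]
            simp
      · left
        have hv1' : v jm = 1 := zmod2_eq_one hv1
        funext k
        simp only [Pi.add_apply, deltaN, hje]
        by_cases hkJ : (k : ℕ) = J
        · have hkj : k = j0 := Fin.ext (by omega)
          rw [if_pos (by omega), hkj, hej0, hvj0]
          decide
        · by_cases hkm : (k : ℕ) = J - 1
          · have hkj : k = jm := Fin.ext (by omega)
            rw [if_neg (by omega), hkj, hejm, hv1']
            decide
          · rw [if_neg (by omega), hothers k hkJ hkm]
            simp
    rw [children, if_neg hene, if_neg hne']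
    rcases key with h | h
    · rw [h]; exact Finset.mem_insert_self _ _
    · rw [h]; exact Finset.mem_insert_of_mem (Finset.mem_singleton_self _)

theorem children_count {n : ℕ} (hn : 1 ≤ n) :
    (∀ e : Fin n → ZMod 2,
      (Finset.univ.filter fun v : Fin n → ZMod 2 => v ≠ 0 ∧ parent v = e).card ≤ 2) ∧
    (Finset.univ.filter fun v : Fin n → ZMod 2 => v ≠ 0 ∧ parent v = 0)
      = {deltaN 0} ∧
    (∀ e : Fin n → ZMod 2, e ≠ 0 → jstar e = n - 1 →
      (Finset.univ.filter fun v : Fin n → ZMod 2 => v ≠ 0 ∧ parent v = e) = ∅) := by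
  have hsub : ∀ e : Fin n → ZMod 2,
      (Finset.univ.filter fun v : Fin n → ZMod 2 => v ≠ 0 ∧ parent v = e) ⊆ children e := by
    intro e v hv
    simp only [Finset.mem_filter] at hv
    exact mem_children hv.2.1 hv.2.2
  have hδne : (deltaN 0 : Fin n → ZMod 2) ≠ 0 := by
    intro h
    have h0 := congrFun h ⟨0, hn⟩
    simp [deltaN] at h0
  have hjδ : jstar (deltaN 0 : Fin n → ZMod 2) = 0 := by
    refine Nat.le_zero.mp (Finset.sup_le ?_)
    intro k hk
    simp only [Finset.mem_filter, Finset.mem_univ, true_and, deltaN] at hk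
    by_contra hk0
    exact (Finset.mem_filter.mp hk).2 (if_neg (by omega))
  have hpδ : parent (deltaN 0 : Fin n → ZMod 2) = 0 := by
    funext k
    simp only [parent, if_neg hδne, hjδ]
    by_cases hk : (k : ℕ) = 0
    · simp [hk]
    · simp [hk, deltaN]
  refine ⟨?_, ?_, ?_⟩
  · intro e
    refine le_trans (Finset.card_le_card (hsub e)) ?_
    rw [children]
    split
    · simp
    · split
      · simp
      · exact le_trans (Finset.card_insert_le _ _) (by simp)
  · apply Finset.Subset.antisymm
    · have h := hsub 0
      rwa [children, if_pos rfl] at h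
    · rw [Finset.singleton_subset_iff, Finset.mem_filter]
      exact ⟨Finset.mem_univ _, hδne, hpδ⟩
  · intro e hene hj
    have h := hsub e
    rwa [children, if_neg hene, if_pos hj, Finset.subset_empty] at h
end

section
/- (SGRAND returns a maximum-likelihood element.) Suppose n ≥ 1, assume the reliability hypotheses (H1) and (H2), let (S, e) be an SGRAND run, and let E be a nonempty set of error vectors (e.g. the set of differences between the demodulated word and the code words). Then there exists g* < 2^n such that S g* is nonempty, e g* ∈ E, e g ∉ E for every g < g*, and Q v ≤ Q (e g*) for every v ∈ E; that is, the first queried element of E has maximal likelihood among all elements of E. -/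
/-- An SGRAND run: `S g` is the candidate set before the `(g+1)`-st query and
`E g` is the `(g+1)`-st queried error vector. -/
def SGRANDRun {n : ℕ} (q : Fin n → ZMod 2 → NNReal)
    (S : ℕ → Finset (Fin n → ZMod 2)) (E : ℕ → Fin n → ZMod 2) : Prop :=
  S 0 = {0} ∧
  ∀ g, (S g).Nonempty →
    E g ∈ S g ∧ (∀ v ∈ S g, Q q v ≤ Q q (E g)) ∧
    S (g + 1) = (S g).erase (E g) ∪ children (E g)

lemma exists_jstar {n : ℕ} {e : Fin n → ZMod 2} (he : e ≠ 0) :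
    ∃ J : Fin n, (J : ℕ) = jstar e ∧ e J = 1 := by
  have hne : (Finset.univ.filter fun j => e j ≠ 0).Nonempty := by
    rcases Function.ne_iff.mp he with ⟨j, hj⟩
    exact ⟨j, by simpa using hj⟩
  obtain ⟨J, hJmem, hJ⟩ := Finset.exists_mem_eq_sup _ hne (fun j => (j : ℕ))
  refine ⟨J, hJ.symm, zmod2_eq_one ?_⟩
  simpa using hJmem

lemma jstar_lt {n : ℕ} {e : Fin n → ZMod 2} (he : e ≠ 0) : jstar e < n := by
  obtain ⟨J, hJ, -⟩ := exists_jstar he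
  exact hJ ▸ J.isLt

lemma jstar_eq {n : ℕ} {v : Fin n → ZMod 2} {m : ℕ}
    (h1 : ∃ J : Fin n, (J : ℕ) = m ∧ v J ≠ 0)
    (h2 : ∀ j : Fin n, v j ≠ 0 → (j : ℕ) ≤ m) : jstar v = m := by
  obtain ⟨J, hJ, hvJ⟩ := h1
  refine le_antisymm (Finset.sup_le ?_) (hJ ▸ le_jstar hvJ)
  intro j hj
  exact h2 j (by simpa using hj)

lemma parent_apply {n : ℕ} {v : Fin n → ZMod 2} (hv : v ≠ 0) (j : Fin n) :
    parent v j = if (j : ℕ) = jstar v then 0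
      else if 0 < jstar v ∧ (j : ℕ) = jstar v - 1 then 1 else v j := by
  simp [parent, hv]

lemma parent_ne_self {n : ℕ} {v : Fin n → ZMod 2} (hv : v ≠ 0) : parent v ≠ v := by
  obtain ⟨J, hJ, hvJ⟩ := exists_jstar hv
  intro h
  have := congrFun h J
  rw [parent_apply hv, if_pos hJ, hvJ] at this
  exact one_ne_zero this.symm

lemma parent_of_jstar_zero {n : ℕ} {v : Fin n → ZMod 2} (hv : v ≠ 0) (h0 : jstar v = 0) :
    v = deltaN 0 ∧ parent v = 0 := by
  obtain ⟨J, hJ, hvJ⟩ := exists_jstar hv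
  constructor
  · funext j
    by_cases hj : (j : ℕ) = 0
    · have : j = J := Fin.ext (by omega)
      simp [deltaN, hj, this, hvJ, hJ, h0]
    · have : jstar v < (j : ℕ) := by omega
      simp [deltaN, hj, eq_zero_of_jstar_lt this]
  · funext j
    rw [parent_apply hv]
    by_cases hj : (j : ℕ) = jstar v
    · simp [hj]
    · have : jstar v < (j : ℕ) := by omega
      simp [hj, eq_zero_of_jstar_lt this, h0]

lemma parent_of_jstar_pos {n : ℕ} {v : Fin n → ZMod 2} (hv : v ≠ 0) (h0 : 0 < jstar v) :
    parent v ≠ 0 ∧ jstar (parent v) = jstar v - 1 := by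
  have hlt : jstar v < n := jstar_lt hv
  have hK : jstar v - 1 < n := by omega
  set K : Fin n := ⟨jstar v - 1, hK⟩ with hKdef
  have hpK : parent v K = 1 := by
    rw [parent_apply hv]
    have : (K : ℕ) ≠ jstar v := by simp [hKdef]; omega
    simp [this, h0, show (K : ℕ) = jstar v - 1 from rfl, show jstar v - 1 ≠ jstar v by omega]
  have hpne : parent v ≠ 0 := by
    intro h
    rw [h] at hpK
    exact one_ne_zero hpK.symm
  refine ⟨hpne, jstar_eq ⟨K, rfl, by simp [hpK]⟩ ?_⟩
  intro j hj
  by_contra hgt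
  push_neg at hgt
  rw [parent_apply hv] at hj
  by_cases h1 : (j : ℕ) = jstar v
  · simp [h1] at hj
  · have h2 : ¬(0 < jstar v ∧ (j : ℕ) = jstar v - 1) := by omega
    rw [if_neg h1, if_neg h2] at hj
    have : jstar v < (j : ℕ) := by omega
    exact hj (eq_zero_of_jstar_lt this)

lemma add_deltaN_apply {n : ℕ} (e : Fin n → ZMod 2) (k : ℕ) (j : Fin n) :
    (e + (deltaN k : Fin n → ZMod 2)) j = if (j : ℕ) = k then e j + 1 else e j := by
  by_cases h : (j : ℕ) = k <;> simp [deltaN, h]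

lemma zmod2_oneone : (1 : ZMod 2) + 1 = 0 := by decide

lemma mem_children_parent {n : ℕ} {v : Fin n → ZMod 2} (hv : v ≠ 0) :
    v ∈ children (parent v) := by
  obtain ⟨J, hJ, hvJ⟩ := exists_jstar hv
  rcases Nat.eq_zero_or_pos (jstar v) with h0 | h0
  · obtain ⟨hvd, hp⟩ := parent_of_jstar_zero hv h0
    rw [hp, children, if_pos rfl, hvd]
    exact Finset.mem_singleton_self _
  · obtain ⟨hpne, hpj⟩ := parent_of_jstar_pos hv h0
    have hm : jstar v < n := jstar_lt hv
    have hne' : jstar v - 1 ≠ jstar v := by omega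
    have hne2 : jstar (parent v) ≠ n - 1 := by omega
    rw [children, if_neg hpne, if_neg hne2, hpj]
    have hmm : jstar v - 1 + 1 = jstar v := by omega
    rw [hmm]
    have hKlt : jstar v - 1 < n := by omega
    set K : Fin n := ⟨jstar v - 1, hKlt⟩ with hKdef
    have hKne : (K : ℕ) ≠ jstar v := by simp [hKdef]; omega
    rcases (by decide : ∀ x : ZMod 2, x = 0 ∨ x = 1) (v K) with hvK | hvK
    · -- v = parent v + deltaN (jstar v - 1) + deltaN (jstar v)
      rw [Finset.mem_insert, Finset.mem_singleton]
      right
      funext j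
      simp only [Pi.add_apply, deltaN, parent_apply hv]
      by_cases hj1 : (j : ℕ) = jstar v
      · have hj2 : (j : ℕ) ≠ jstar v - 1 := by omega
        have : j = J := Fin.ext (by omega)
        simp [hj1, hj2, this, hvJ, hJ, hne', hne'.symm]
      · by_cases hj2 : (j : ℕ) = jstar v - 1
        · have : j = K := Fin.ext (by simp [hKdef, hj2])
          simp [hj1, hj2, h0, this, hvK, zmod2_oneone, hJ, hne', hKne, show (K : ℕ) = jstar v - 1 from rfl]
        · have h3 : ¬(0 < jstar v ∧ (j : ℕ) = jstar v - 1) := by omega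
          simp [hj1, hj2, h3]
    · -- v = parent v + deltaN (jstar v)
      rw [Finset.mem_insert]
      left
      funext j
      simp only [Pi.add_apply, deltaN, parent_apply hv]
      by_cases hj1 : (j : ℕ) = jstar v
      · have : j = J := Fin.ext (by omega)
        simp [hj1, this, hvJ, hJ, hne', hne'.symm]
      · by_cases hj2 : (j : ℕ) = jstar v - 1
        · have : j = K := Fin.ext (by simp [hKdef, hj2])
          simp [hj1, hj2, h0, this, hvK, hJ, hne', hKne, show (K : ℕ) = jstar v - 1 from rfl]
        · have h3 : ¬(0 < jstar v ∧ (j : ℕ) = jstar v - 1) := by omega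
          simp [hj1, hj2, h3]

lemma deltaN_zero_props {n : ℕ} (hn : 0 < n) :
    (deltaN 0 : Fin n → ZMod 2) ≠ 0 ∧ jstar (deltaN 0 : Fin n → ZMod 2) = 0 := by
  have h1 : (deltaN 0 : Fin n → ZMod 2) ⟨0, hn⟩ = 1 := by simp [deltaN]
  have hne : (deltaN 0 : Fin n → ZMod 2) ≠ 0 := by
    intro h; rw [h] at h1; exact one_ne_zero h1.symm
  refine ⟨hne, jstar_eq ⟨⟨0, hn⟩, rfl, by simp [h1]⟩ ?_⟩
  intro j hj
  by_contra hgt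
  push_neg at hgt
  simp [deltaN] at hj
  omega

lemma of_mem_children {n : ℕ} (hn : 0 < n) {e v : Fin n → ZMod 2} (hv : v ∈ children e) :
    v ≠ 0 ∧ parent v = e := by
  by_cases he : e = 0
  · rw [children, if_pos he, Finset.mem_singleton] at hv
    subst hv
    obtain ⟨hne, hj0⟩ := deltaN_zero_props (n := n) hn
    exact ⟨hne, by rw [(parent_of_jstar_zero hne hj0).2, he]⟩
  · rw [children, if_neg he] at hv
    by_cases hj : jstar e = n - 1
    · simp [hj] at hv
    · rw [if_neg hj, Finset.mem_insert, Finset.mem_singleton] at hv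
      obtain ⟨J, hJ, heJ⟩ := exists_jstar he
      have hm : jstar e < n := jstar_lt he
      have hm1 : jstar e + 1 < n := by omega
      set K : Fin n := ⟨jstar e + 1, hm1⟩ with hKdef
      have heK : e K = 0 := eq_zero_of_jstar_lt (by simp [hKdef])
      -- facts for both children: value at K is 1
      have hub : ∀ (w : Fin n → ZMod 2), (∀ j : Fin n, (j:ℕ) ≠ jstar e → (j:ℕ) ≠ jstar e + 1 → w j = e j) →
          ∀ j : Fin n, w j ≠ 0 → (j : ℕ) ≤ jstar e + 1 := by
        intro w hw j hjne
        by_contra hgt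
        push_neg at hgt
        have h1 : (j:ℕ) ≠ jstar e := by omega
        have h2 : (j:ℕ) ≠ jstar e + 1 := by omega
        rw [hw j h1 h2] at hjne
        exact hjne (eq_zero_of_jstar_lt (by omega))
      rcases hv with hv | hv
      · -- v = e + deltaN (jstar e + 1)
        subst hv
        have hvK : (e + (deltaN (jstar e + 1) : Fin n → ZMod 2)) K = 1 := by
          simp [Pi.add_apply, deltaN, hKdef, heK, show e ⟨jstar e + 1, hm1⟩ = 0 from heK]
        have hagree : ∀ j : Fin n, (j:ℕ) ≠ jstar e → (j:ℕ) ≠ jstar e + 1 →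
            (e + (deltaN (jstar e + 1) : Fin n → ZMod 2)) j = e j := by
          intro j _ h2; simp [Pi.add_apply, deltaN, h2]
        have hvne : (e + (deltaN (jstar e + 1) : Fin n → ZMod 2)) ≠ 0 := by
          intro h; rw [h] at hvK; exact one_ne_zero hvK.symm
        have hjv : jstar (e + (deltaN (jstar e + 1) : Fin n → ZMod 2)) = jstar e + 1 :=
          jstar_eq ⟨K, rfl, by simp [hvK]⟩ (hub _ fun j h1 h2 => hagree j h1 h2)
        refine ⟨hvne, ?_⟩
        funext j
        rw [parent_apply hvne, hjv]
        by_cases hj1 : (j:ℕ) = jstar e + 1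
        · have : j = K := Fin.ext (by simp [hKdef, hj1])
          simp [hj1, this ▸ heK]
        · by_cases hj2 : (j:ℕ) = jstar e
          · have : j = J := Fin.ext (by omega)
            simp [hj1, hj2, this, heJ, hJ, show (J:ℕ) ≠ jstar e + 1 by omega]
          · have h3 : ¬(0 < jstar e + 1 ∧ (j:ℕ) = jstar e + 1 - 1) := by omega
            simp [hj1, hj2, h3, deltaN]
      · -- v = e + deltaN (jstar e) + deltaN (jstar e + 1)
        subst hv
        set w := e + (deltaN (jstar e) : Fin n → ZMod 2) + deltaN (jstar e + 1) with hw
        have hwK : w K = 1 := by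
          simp [hw, Pi.add_apply, deltaN, hKdef, heK, show e ⟨jstar e + 1, hm1⟩ = 0 from heK]
        have hagree : ∀ j : Fin n, (j:ℕ) ≠ jstar e → (j:ℕ) ≠ jstar e + 1 → w j = e j := by
          intro j h1 h2; simp [hw, Pi.add_apply, deltaN, h1, h2]
        have hwne : w ≠ 0 := by
          intro h; rw [h] at hwK; exact one_ne_zero hwK.symm
        have hjv : jstar w = jstar e + 1 :=
          jstar_eq ⟨K, rfl, by simp [hwK]⟩ (hub _ hagree)
        refine ⟨hwne, ?_⟩
        funext j
        rw [parent_apply hwne, hjv]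
        by_cases hj1 : (j:ℕ) = jstar e + 1
        · have : j = K := Fin.ext (by simp [hKdef, hj1])
          simp [hj1, this ▸ heK]
        · by_cases hj2 : (j:ℕ) = jstar e
          · have : j = J := Fin.ext (by omega)
            simp [hj1, hj2, this, heJ, hJ, show (J:ℕ) ≠ jstar e + 1 by omega]
          · have h3 : ¬(0 < jstar e + 1 ∧ (j:ℕ) = jstar e + 1 - 1) := by omega
            simp [hj1, hj2, h3, hw, deltaN, Pi.add_apply]

lemma Q_le_single {n : ℕ} (q : Fin n → ZMod 2 → NNReal) {v e : Fin n → ZMod 2} (J : Fin n)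
    (hagree : ∀ j, j ≠ J → v j = e j) (h : q J (v J) ≤ q J (e J)) : Q q v ≤ Q q e := by
  rw [Q, Q, ← Finset.mul_prod_erase _ _ (Finset.mem_univ J),
    ← Finset.mul_prod_erase _ _ (Finset.mem_univ J)]
  have hR : ∏ j ∈ Finset.univ.erase J, q j (v j) = ∏ j ∈ Finset.univ.erase J, q j (e j) :=
    Finset.prod_congr rfl fun j hj => by rw [hagree j (Finset.ne_of_mem_erase hj)]
  rw [hR]
  exact mul_le_mul' h le_rfl

lemma Q_le_two {n : ℕ} (q : Fin n → ZMod 2 → NNReal) {v e : Fin n → ZMod 2} (J K : Fin n)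
    (hne : K ≠ J) (hagree : ∀ j, j ≠ J → j ≠ K → v j = e j)
    (h : q J (v J) * q K (v K) ≤ q J (e J) * q K (e K)) : Q q v ≤ Q q e := by
  have hKmem : K ∈ Finset.univ.erase J := Finset.mem_erase.mpr ⟨hne, Finset.mem_univ K⟩
  have hexp : ∀ w : Fin n → ZMod 2, Q q w =
      q J (w J) * q K (w K) * ∏ j ∈ (Finset.univ.erase J).erase K, q j (w j) := by
    intro w
    rw [Q, ← Finset.mul_prod_erase _ _ (Finset.mem_univ J), ← Finset.mul_prod_erase _ _ hKmem,
      mul_assoc]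
  rw [hexp v, hexp e]
  have hR : ∏ j ∈ (Finset.univ.erase J).erase K, q j (v j)
      = ∏ j ∈ (Finset.univ.erase J).erase K, q j (e j) := by
    refine Finset.prod_congr rfl fun j hj => ?_
    rw [Finset.mem_erase, Finset.mem_erase] at hj
    rw [hagree j hj.2.1 hj.1]
  rw [hR]
  exact mul_le_mul' h le_rfl

lemma children_Q_le {n : ℕ} (hn : 0 < n) (q : Fin n → ZMod 2 → NNReal)
    (H1 : ∀ j, q j 1 ≤ q j 0)
    (H2 : ∀ j l : Fin n, j < l → q j 0 * q l 1 ≤ q j 1 * q l 0)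
    {e v : Fin n → ZMod 2} (hv : v ∈ children e) : Q q v ≤ Q q e := by
  by_cases he : e = 0
  · rw [children, if_pos he, Finset.mem_singleton] at hv
    subst hv he
    refine Q_le_single q ⟨0, hn⟩ (fun j hj => ?_) ?_
    · have : (j : ℕ) ≠ 0 := fun h => hj (Fin.ext h)
      simp [deltaN, this]
    · simpa [deltaN] using H1 ⟨0, hn⟩
  · rw [children, if_neg he] at hv
    by_cases hj : jstar e = n - 1
    · simp [hj] at hv
    · rw [if_neg hj, Finset.mem_insert, Finset.mem_singleton] at hv
      obtain ⟨J, hJ, heJ⟩ := exists_jstar he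
      have hm : jstar e < n := jstar_lt he
      have hm1 : jstar e + 1 < n := by omega
      set K : Fin n := ⟨jstar e + 1, hm1⟩ with hKdef
      have heK : e K = 0 := eq_zero_of_jstar_lt (by simp [hKdef])
      have hJK : (J : ℕ) ≠ (K : ℕ) := by simp [hKdef]; omega
      rcases hv with hv | hv
      · subst hv
        refine Q_le_single q K (fun j hj => ?_) ?_
        · have : (j : ℕ) ≠ jstar e + 1 := fun h => hj (Fin.ext (by simp [hKdef, h]))
          simp [deltaN, this]
        · have h1 : (e + (deltaN (jstar e + 1) : Fin n → ZMod 2)) K = 1 := by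
            simp [Pi.add_apply, deltaN, hKdef, heK, show e ⟨jstar e + 1, hm1⟩ = 0 from heK]
          rw [h1, heK]
          exact H1 K
      · subst hv
        refine Q_le_two q J K (fun h => hJK (congrArg Fin.val h).symm) (fun j hj1 hj2 => ?_) ?_
        · have h1 : (j : ℕ) ≠ jstar e := fun h => hj1 (Fin.ext (by omega))
          have h2 : (j : ℕ) ≠ jstar e + 1 := fun h => hj2 (Fin.ext (by simp [hKdef, h]))
          simp [Pi.add_apply, deltaN, h1, h2]
        · have h1 : (e + (deltaN (jstar e) : Fin n → ZMod 2) + (deltaN (jstar e + 1) : Fin n → ZMod 2)) J = 0 := by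
            simp [Pi.add_apply, deltaN, hJ, hKdef, heJ, zmod2_oneone, show jstar e ≠ jstar e + 1 by omega]
          have h2 : (e + (deltaN (jstar e) : Fin n → ZMod 2) + (deltaN (jstar e + 1) : Fin n → ZMod 2)) K = 1 := by
            simp [Pi.add_apply, deltaN, hKdef, heK, show jstar e + 1 ≠ jstar e by omega, show e ⟨jstar e + 1, hm1⟩ = 0 from heK]
          rw [h1, h2, heJ, heK]
          exact H2 J K (by rw [Fin.lt_iff_val_lt_val, hJ]; simp [hKdef])

def Qd {n : ℕ} (E : ℕ → Fin n → ZMod 2) (g : ℕ) : Finset (Fin n → ZMod 2) :=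
  (Finset.range g).image E

noncomputable def idl {n : ℕ} (A : Finset (Fin n → ZMod 2)) : Finset (Fin n → ZMod 2) := by
  classical
  exact Finset.univ.filter (fun v => v ∉ A ∧ (v = 0 ∨ parent v ∈ A))

lemma mem_idl {n : ℕ} {A : Finset (Fin n → ZMod 2)} {v : Fin n → ZMod 2} :
    v ∈ idl A ↔ v ∉ A ∧ (v = 0 ∨ parent v ∈ A) := by
  simp [idl]

lemma idl_nonempty {n : ℕ} {A : Finset (Fin n → ZMod 2)} (hA : A ≠ Finset.univ) :
    (idl A).Nonempty := by
  obtain ⟨v0, hv0⟩ : ∃ v, v ∉ A := by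
    by_contra h
    push_neg at h
    exact hA (Finset.eq_univ_of_forall h)
  suffices h : ∀ k, ∀ v : Fin n → ZMod 2, v ∉ A →
      (if v = 0 then 0 else jstar v + 1) ≤ k → (idl A).Nonempty by
    exact h _ v0 hv0 le_rfl
  intro k
  induction k with
  | zero =>
    intro v hv hk
    have hv0 : v = 0 := by by_contra h; simp [h] at hk
    exact ⟨v, mem_idl.mpr ⟨hv, Or.inl hv0⟩⟩
  | succ k ih =>
    intro v hv hk
    by_cases hv0 : v = 0
    · exact ⟨v, mem_idl.mpr ⟨hv, Or.inl hv0⟩⟩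
    by_cases hp : parent v ∈ A
    · exact ⟨v, mem_idl.mpr ⟨hv, Or.inr hp⟩⟩
    refine ih (parent v) hp ?_
    rw [if_neg hv0] at hk
    rcases Nat.eq_zero_or_pos (jstar v) with h0 | h0
    · rw [(parent_of_jstar_zero hv0 h0).2]
      simp
    · obtain ⟨hpne, hpj⟩ := parent_of_jstar_pos hv0 h0
      rw [if_neg hpne, hpj]
      omega

variable {n : ℕ} {q : Fin n → ZMod 2 → NNReal} {S : ℕ → Finset (Fin n → ZMod 2)}
  {E : ℕ → Fin n → ZMod 2}

lemma run_inv (hn : 0 < n) (hrun : SGRANDRun q S E) :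
    ∀ g, (∀ g' < g, (S g').Nonempty) → S g = idl (Qd E g) := by
  intro g
  induction g using Nat.strong_induction_on with
  | _ g ih =>
    intro hpre
    match g with
    | 0 =>
      rw [hrun.1]
      ext v
      simp [mem_idl, Qd]
    | g + 1 =>
      have hSg : S g = idl (Qd E g) := ih g (by omega) (fun x hx => hpre x (by omega))
      have hg : (S g).Nonempty := hpre g (by omega)
      obtain ⟨hEg, hmax, hstep⟩ := hrun.2 g hg
      have hEgS : E g ∉ Qd E g ∧ (E g = 0 ∨ parent (E g) ∈ Qd E g) :=
        mem_idl.mp (hSg ▸ hEg)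
      have hclos : ∀ v ∈ Qd E g, v ≠ 0 → parent v ∈ Qd E g := by
        intro v hv hvne
        simp only [Qd, Finset.mem_image, Finset.mem_range] at hv
        obtain ⟨g', hg', hEg'⟩ := hv
        have hSg' : S g' = idl (Qd E g') := ih g' (by omega) (fun x hx => hpre x (by omega))
        have hmem : E g' ∈ S g' := (hrun.2 g' (hpre g' (by omega))).1
        rw [hSg', mem_idl] at hmem
        rcases hmem.2 with h | h
        · exact absurd (hEg' ▸ h) hvne
        · rw [← hEg']
          refine Finset.mem_of_subset ?_ h
          exact Finset.image_subset_image (Finset.range_subset_range.mpr (by omega))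
      have hQd1 : Qd E (g + 1) = insert (E g) (Qd E g) := by
        simp [Qd, Finset.range_add_one]
      rw [hstep, hSg, hQd1]
      ext v
      rw [Finset.mem_union, Finset.mem_erase, mem_idl, mem_idl, Finset.mem_insert]
      constructor
      · rintro (⟨hne, h1, h2⟩ | hch)
        · exact ⟨by tauto, h2.imp id Finset.mem_insert_of_mem⟩
        · obtain ⟨hvne, hpv⟩ := of_mem_children hn hch
          have hvA : v ∉ Qd E g := fun hvA => hEgS.1 (hpv ▸ hclos v hvA hvne)
          have hvE : v ≠ E g := fun h => parent_ne_self hvne (h ▸ hpv)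
          exact ⟨by tauto, Or.inr (Finset.mem_insert.mpr (Or.inl hpv))⟩
      · rintro ⟨h1, h2⟩
        push_neg at h1
        rcases h2 with h2 | h2
        · exact Or.inl ⟨h1.1, h1.2, Or.inl h2⟩
        · rcases Finset.mem_insert.mp h2 with h3 | h3
          · by_cases hv0 : v = 0
            · exact Or.inl ⟨h1.1, h1.2, Or.inl hv0⟩
            · exact Or.inr (h3 ▸ mem_children_parent hv0)
          · exact Or.inl ⟨h1.1, h1.2, Or.inr h3⟩

lemma run_card (hn : 0 < n) (hrun : SGRANDRun q S E) :
    ∀ g, (∀ g' < g, (S g').Nonempty) → (Qd E g).card = g := by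
  intro g
  induction g with
  | zero => simp [Qd]
  | succ g ih =>
    intro hpre
    have hg : (S g).Nonempty := hpre g (by omega)
    have hEg : E g ∈ S g := (hrun.2 g hg).1
    have hnot : E g ∉ Qd E g := by
      rw [run_inv hn hrun g (fun x hx => hpre x (by omega)), mem_idl] at hEg
      exact hEg.1
    have hQd1 : Qd E (g + 1) = insert (E g) (Qd E g) := by
      simp [Qd, Finset.range_add_one]
    rw [hQd1, Finset.card_insert_of_notMem hnot, ih (fun x hx => hpre x (by omega))]

lemma card_univ_err : Fintype.card (Fin n → ZMod 2) = 2 ^ n := by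
  rw [Fintype.card_fun, ZMod.card, Fintype.card_fin]

lemma run_nonempty (hn : 0 < n) (hrun : SGRANDRun q S E) :
    ∀ g < 2 ^ n, (S g).Nonempty := by
  intro g
  induction g using Nat.strong_induction_on with
  | _ g ih =>
    intro hg
    have hpre : ∀ g' < g, (S g').Nonempty := fun g' h => ih g' h (by omega)
    rw [run_inv hn hrun g hpre]
    refine idl_nonempty fun hA => ?_
    have := run_card hn hrun g hpre
    rw [hA, Finset.card_univ, card_univ_err] at this
    omega

lemma run_mono (hn : 0 < n)
    (H1 : ∀ j, q j 1 ≤ q j 0)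
    (H2 : ∀ j l : Fin n, j < l → q j 0 * q l 1 ≤ q j 1 * q l 0)
    (hrun : SGRANDRun q S E) (g1 g2 : ℕ) (h12 : g1 ≤ g2)
    (hne : ∀ g' ≤ g2, (S g').Nonempty) : Q q (E g2) ≤ Q q (E g1) := by
  induction g2, h12 using Nat.le_induction with
  | base => exact le_rfl
  | succ g2 h12 ih =>
    have hstep := (hrun.2 g2 (hne g2 (by omega))).2.2
    have hmem : E (g2 + 1) ∈ S (g2 + 1) := (hrun.2 (g2 + 1) (hne (g2 + 1) le_rfl)).1
    have hle : Q q (E (g2 + 1)) ≤ Q q (E g2) := by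
      rw [hstep, Finset.mem_union] at hmem
      rcases hmem with h | h
      · exact (hrun.2 g2 (hne g2 (by omega))).2.1 _ (Finset.mem_of_mem_erase h)
      · exact children_Q_le hn q H1 H2 h
    exact hle.trans (ih (fun g' h => hne g' (by omega)))

theorem sgrand_ml {n : ℕ} (hn : 1 ≤ n) (q : Fin n → ZMod 2 → NNReal)
    (H1 : ∀ j, q j 1 ≤ q j 0)
    (H2 : ∀ j l : Fin n, j < l → q j 0 * q l 1 ≤ q j 1 * q l 0)
    (S : ℕ → Finset (Fin n → ZMod 2)) (E : ℕ → Fin n → ZMod 2)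
    (hrun : SGRANDRun q S E)
    (Err : Set (Fin n → ZMod 2)) (hErr : Err.Nonempty) :
    ∃ g < 2 ^ n, (S g).Nonempty ∧ E g ∈ Err ∧
      (∀ g' < g, E g' ∉ Err) ∧ ∀ v ∈ Err, Q q v ≤ Q q (E g) := by
  classical
  have hn0 : 0 < n := hn
  have hne : ∀ g < 2 ^ n, (S g).Nonempty := run_nonempty hn0 hrun
  have hcard : (Qd E (2 ^ n)).card = 2 ^ n := run_card hn0 hrun _ (fun g' h => hne g' h)
  have huniv : Qd E (2 ^ n) = Finset.univ := by
    apply Finset.eq_univ_of_card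
    rw [hcard, card_univ_err]
  have hall : ∀ v : Fin n → ZMod 2, ∃ g < 2 ^ n, E g = v := by
    intro v
    have : v ∈ Qd E (2 ^ n) := huniv ▸ Finset.mem_univ v
    simpa [Qd, Finset.mem_image, Finset.mem_range] using this
  set T : Finset ℕ := (Finset.range (2 ^ n)).filter (fun g => E g ∈ Err) with hT
  have hTne : T.Nonempty := by
    obtain ⟨v0, hv0⟩ := hErr
    obtain ⟨g0, hg0, hEg0⟩ := hall v0
    exact ⟨g0, by simp [hT, hg0, hEg0, hv0]⟩
  set g := T.min' hTne with hg
  have hgT : g ∈ T := T.min'_mem hTne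
  rw [hT, Finset.mem_filter, Finset.mem_range] at hgT
  refine ⟨g, hgT.1, hne g hgT.1, hgT.2, ?_, ?_⟩
  · intro g' hg' hmem
    have : g' ∈ T := by
      rw [hT, Finset.mem_filter, Finset.mem_range]
      exact ⟨by omega, hmem⟩
    exact absurd (T.min'_le g' this) (by omega)
  · intro v hv
    obtain ⟨g', hg', hEg'⟩ := hall v
    have hg'T : g' ∈ T := by
      rw [hT, Finset.mem_filter, Finset.mem_range]
      exact ⟨hg', hEg' ▸ hv⟩
    have hle : g ≤ g' := T.min'_le g' hg'T
    rw [← hEg']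
    exact run_mono hn0 H1 H2 hrun g g' hle (fun g'' h => hne g'' (by omega))
end

section
/- (Size of the candidate set.) Suppose n ≥ 1 and let (S, e) be an SGRAND run. For every g such that S h is nonempty for all h < g, the candidate set satisfies (S g).card ≤ g + 1; that is, after g queries the set of candidate error vectors contains at most g + 1 elements. -/
theorem children_card_le {n : ℕ} (e : Fin n → ZMod 2) : (children e).card ≤ 2 := by
  unfold children
  split
  · simp
  · split
    · simp
    · exact Finset.card_insert_le _ _ |>.trans (by simp)

theorem sgrand_card {n : ℕ} (hn : 1 ≤ n) (q : Fin n → ZMod 2 → NNReal)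
    (S : ℕ → Finset (Fin n → ZMod 2)) (E : ℕ → Fin n → ZMod 2)
    (hrun : SGRANDRun q S E) :
    ∀ g : ℕ, (∀ h < g, (S h).Nonempty) → (S g).card ≤ g + 1 := by
  obtain ⟨h0, hstep⟩ := hrun
  intro g
  induction g with
  | zero => intro _; simp [h0]
  | succ g ih =>
    intro hne
    have hSg : (S g).Nonempty := hne g (Nat.lt_succ_self g)
    obtain ⟨hmem, _, heq⟩ := hstep g hSg
    have hc : (children (E g)).card ≤ 2 := children_card_le (E g)
    have hcard : (S g).card ≤ g + 1 := ih (fun h hh => hne h (hh.trans (Nat.lt_succ_self g)))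
    calc (S (g + 1)).card = ((S g).erase (E g) ∪ children (E g)).card := by rw [heq]
      _ ≤ ((S g).erase (E g)).card + (children (E g)).card := Finset.card_union_le _ _
      _ ≤ (S g).card - 1 + 2 := by
          gcongr
          exact le_of_eq (Finset.card_erase_of_mem hmem)
      _ ≤ g + 1 + 1 := by omega
end
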